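/- Let 𝔊₂ be the 7-dimensional real Lie algebra with basis (X₁,X₂,X₃,X₄,X₅,X,Y) and nonzero brackets [X₁,X₂]=X₄, [X₁,X₃]=X₅, [X,X₁]=X₁, [X,X₄]=X₄, [X,X₅]=X₅, [Y,X₃]=X₃, [Y,X₅]=X₅. For F ∈ 𝔊₂* with coordinates (α₁,α₂,α₃,α₄,α₅,α,β) in the dual basis, let B_F be the skew-symmetric bilinear form on 𝔊₂ defined by B_F(A,B) = ⟨F,[A,B]⟩. Then the rank of B_F equals 6 if and only if α₄ ≠ 0 and (α₃ ≠ 0 or α₅ ≠ 0); in particular the maximal possible rank of B_F over all F is 6. -/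

import Mathlib

noncomputable section

/-- Half of the structure constants of the Lie algebra 𝔊₂: `g2half i j` is the
coordinate vector of `[Xᵢ, Xⱼ]` for the ordered pairs `(i,j)` listed in the paper
(indices `0,…,4` are `X₁,…,X₅`, index `5` is `X`, index `6` is `Y`). -/
def g2half (i j : Fin 7) : Fin 7 → ℝ :=
  if i = 0 ∧ j = 1 then Pi.single 3 1      -- [X₁,X₂] = X₄
  else if i = 0 ∧ j = 2 then Pi.single 4 1 -- [X₁,X₃] = X₅
  else if i = 5 ∧ j = 0 then Pi.single 0 1 -- [X,X₁] = X₁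
  else if i = 5 ∧ j = 3 then Pi.single 3 1 -- [X,X₄] = X₄
  else if i = 5 ∧ j = 4 then Pi.single 4 1 -- [X,X₅] = X₅
  else if i = 6 ∧ j = 2 then Pi.single 2 1 -- [Y,X₃] = X₃
  else if i = 6 ∧ j = 4 then Pi.single 4 1 -- [Y,X₅] = X₅
  else 0

/-- The bracket `[Xᵢ, Xⱼ]` (in coordinates) of basis vectors of 𝔊₂,
obtained by antisymmetrizing `g2half`. -/
def g2br (i j : Fin 7) : Fin 7 → ℝ := g2half i j - g2half j i

/-- The Gram matrix of the bilinear form `B_F(A,B) = ⟨F,[A,B]⟩` in the given basis,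
where `α` is the coordinate vector of `F` in the dual basis. -/
def gramG2 (α : Fin 7 → ℝ) : Matrix (Fin 7) (Fin 7) ℝ :=
  Matrix.of fun i j => ∑ k, α k * g2br i j k

lemma vec7_five {β : Type*} (a b c d e f g : β) : ![a,b,c,d,e,f,g] 5 = f := rfl

lemma vec7_six {β : Type*} (a b c d e f g : β) : ![a,b,c,d,e,f,g] 6 = g := rfl

lemma vec7_five' {β : Type*} (a b c d e f g : β) (h : 5 < 7) :
    ![a,b,c,d,e,f,g] ⟨5, h⟩ = f := rfl

lemma vec7_six' {β : Type*} (a b c d e f g : β) (h : 6 < 7) :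
    ![a,b,c,d,e,f,g] ⟨6, h⟩ = g := rfl

lemma finsucc3 : ((2 : Fin 6).succ : Fin 7) = 3 := rfl
lemma finsucc4 : ((2 : Fin 5).succ.succ : Fin 7) = 4 := rfl
lemma finsucc5 : ((2 : Fin 4).succ.succ.succ : Fin 7) = 5 := rfl
lemma finsucc6 : ((2 : Fin 3).succ.succ.succ.succ : Fin 7) = 6 := rfl

set_option maxHeartbeats 1000000 in
lemma gramG2_eq (α : Fin 7 → ℝ) :
    gramG2 α = !![0, α 3, α 4, 0, 0, -α 0, 0;
                  -α 3, 0, 0, 0, 0, 0, 0;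
                  -α 4, 0, 0, 0, 0, 0, -α 2;
                  0, 0, 0, 0, 0, -α 3, 0;
                  0, 0, 0, 0, 0, -α 4, -α 4;
                  α 0, 0, 0, α 3, α 4, 0, 0;
                  0, 0, α 2, 0, α 4, 0, 0] := by
  ext i j
  fin_cases i <;> fin_cases j <;>
    simp (config := { decide := true }) [gramG2, g2br, g2half, Fin.sum_univ_seven,
      Pi.single_apply, Matrix.cons_val_succ, Matrix.vecHead, Matrix.vecTail] <;> rfl

lemma mulVec_gramG2 (α v : Fin 7 → ℝ) :
    (gramG2 α).mulVec v =
      ![α 3 * v 1 + α 4 * v 2 - α 0 * v 5,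
        -(α 3 * v 0),
        -(α 4 * v 0) - α 2 * v 6,
        -(α 3 * v 5),
        -(α 4 * v 5) - α 4 * v 6,
        α 0 * v 0 + α 3 * v 3 + α 4 * v 4,
        α 2 * v 2 + α 4 * v 4] := by
  rw [gramG2_eq]
  funext i
  fin_cases i <;>
    simp [Matrix.cons_mulVec, Matrix.cons_dotProduct, Matrix.dotProduct_of_isEmpty,
      Matrix.empty_mulVec, vec7_five, vec7_six, vec7_five', vec7_six',
      finsucc3, finsucc4, finsucc5, finsucc6,
      Matrix.vecHead, Matrix.vecTail] <;> ring

lemma mem_ker_gramG2 {α v : Fin 7 → ℝ} :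
    v ∈ LinearMap.ker (gramG2 α).mulVecLin ↔ (gramG2 α).mulVec v = 0 := by
  rw [LinearMap.mem_ker, Matrix.mulVecLin_apply]

/-- the universal kernel vector -/
lemma wker (α : Fin 7 → ℝ) :
    (![0, -(α 4 * α 4), α 3 * α 4, α 2 * α 4, -(α 2 * α 3), 0, 0] : Fin 7 → ℝ) ∈
      LinearMap.ker (gramG2 α).mulVecLin := by
  rw [mem_ker_gramG2, mulVec_gramG2]
  funext i
  fin_cases i <;> simp [vec7_five, vec7_six, vec7_five', vec7_six'] <;> ring

lemma single_ker {α : Fin 7 → ℝ} {j : Fin 7}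
    (h : ∀ i, gramG2 α i j = 0) :
    (Pi.single j 1 : Fin 7 → ℝ) ∈ LinearMap.ker (gramG2 α).mulVecLin := by
  rw [mem_ker_gramG2]
  funext i
  simp [Matrix.mulVec_single, h i]

lemma one_le_finrank_of_mem {p : Submodule ℝ (Fin 7 → ℝ)} {w : Fin 7 → ℝ}
    (hw : w ∈ p) (h0 : w ≠ 0) : 1 ≤ Module.finrank ℝ p := by
  calc 1 = Module.finrank ℝ (Submodule.span ℝ {w}) := (finrank_span_singleton h0).symm
    _ ≤ Module.finrank ℝ p :=
      Submodule.finrank_mono ((Submodule.span_singleton_le_iff_mem _ _).mpr hw)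

lemma two_le_finrank_of_pair {p : Submodule ℝ (Fin 7 → ℝ)} {i j : Fin 7} (hij : i ≠ j)
    (hi : (Pi.single i 1 : Fin 7 → ℝ) ∈ p) (hj : (Pi.single j 1 : Fin 7 → ℝ) ∈ p) :
    2 ≤ Module.finrank ℝ p := by
  have hli : LinearIndependent ℝ ![(Pi.single i 1 : Fin 7 → ℝ), Pi.single j 1] := by
    rw [LinearIndependent.pair_iff]
    intro s t h
    have h1 := congrFun h i
    have h2 := congrFun h j
    simp [Pi.single_apply, hij, hij.symm] at h1 h2
    exact ⟨h1, h2⟩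
  have h2 : Module.finrank ℝ
      (Submodule.span ℝ (Set.range ![(Pi.single i 1 : Fin 7 → ℝ), Pi.single j 1])) = 2 := by
    rw [finrank_span_eq_card hli]; simp
  calc 2 = _ := h2.symm
    _ ≤ Module.finrank ℝ p := by
      apply Submodule.finrank_mono
      rw [Submodule.span_le]
      rintro x ⟨k, rfl⟩
      fin_cases k <;> simpa

lemma finrank_le_one_of_le_span {p : Submodule ℝ (Fin 7 → ℝ)} {w : Fin 7 → ℝ}
    (h : p ≤ Submodule.span ℝ {w}) : Module.finrank ℝ p ≤ 1 := by
  rcases eq_or_ne w 0 with rfl | hw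
  · calc Module.finrank ℝ p ≤ Module.finrank ℝ (Submodule.span ℝ ({0} : Set (Fin 7 → ℝ))) :=
        Submodule.finrank_mono h
      _ ≤ 1 := by
        rw [Submodule.span_zero_singleton]
        simp
  · calc Module.finrank ℝ p ≤ _ := Submodule.finrank_mono h
      _ = 1 := finrank_span_singleton hw

lemma one_le_ker (α : Fin 7 → ℝ) :
    1 ≤ Module.finrank ℝ (LinearMap.ker (gramG2 α).mulVecLin) := by
  by_cases he : α 4 = 0
  · refine one_le_finrank_of_mem (w := Pi.single 4 1) (single_ker ?_) ?_
    · intro i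
      rw [gramG2_eq]
      fin_cases i <;>
        (try simp [he, Matrix.vecHead, Matrix.vecTail, vec7_five, vec7_six, vec7_five', vec7_six'])
    · intro h; simpa using congrFun h 4
  · refine one_le_finrank_of_mem (wker α) ?_
    intro h
    have := congrFun h 1
    simp [mul_self_eq_zero] at this
    exact he this

lemma ker_finrank_one {α : Fin 7 → ℝ} (hd : α 3 ≠ 0) (hce : α 2 ≠ 0 ∨ α 4 ≠ 0) :
    Module.finrank ℝ (LinearMap.ker (gramG2 α).mulVecLin) = 1 := by
  refine le_antisymm ?_ (one_le_ker α)
  have key : ∀ x ∈ LinearMap.ker (gramG2 α).mulVecLin,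
      (α 3 * x 1 + α 4 * x 2 - α 0 * x 5 = 0) ∧ (α 3 * x 0 = 0) ∧
      (α 4 * x 0 + α 2 * x 6 = 0) ∧ (α 3 * x 5 = 0) ∧
      (α 4 * x 5 + α 4 * x 6 = 0) ∧ (α 0 * x 0 + α 3 * x 3 + α 4 * x 4 = 0) ∧
      (α 2 * x 2 + α 4 * x 4 = 0) := by
    intro x hx
    rw [mem_ker_gramG2, mulVec_gramG2] at hx
    have E0 : α 3 * x 1 + α 4 * x 2 - α 0 * x 5 = 0 := by simpa using congrFun hx 0
    have E1 : -(α 3 * x 0) = 0 := by simpa using congrFun hx 1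
    have E2 : -(α 4 * x 0) - α 2 * x 6 = 0 := by simpa [vec7_five, vec7_six, vec7_five', vec7_six'] using congrFun hx 2
    have E3 : -(α 3 * x 5) = 0 := by simpa [vec7_five, vec7_six, vec7_five', vec7_six'] using congrFun hx 3
    have E4 : -(α 4 * x 5) - α 4 * x 6 = 0 := by simpa [vec7_five, vec7_six, vec7_five', vec7_six'] using congrFun hx 4
    have E5 : α 0 * x 0 + α 3 * x 3 + α 4 * x 4 = 0 := by
      simpa [vec7_five, vec7_six, vec7_five', vec7_six'] using congrFun hx 5
    have E6 : α 2 * x 2 + α 4 * x 4 = 0 := by simpa [vec7_five, vec7_six, vec7_five', vec7_six'] using congrFun hx 6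
    refine ⟨E0, by linarith, by linarith, by linarith, by linarith, E5, E6⟩
  by_cases he : α 4 = 0
  · -- kernel is spanned by e₄
    have hc : α 2 ≠ 0 := by tauto
    apply finrank_le_one_of_le_span (w := (Pi.single 4 1 : Fin 7 → ℝ))
    intro x hx
    obtain ⟨E0, E1, E2, E3, E4, E5, E6⟩ := key x hx
    have hx0 : x 0 = 0 := by
      rcases mul_eq_zero.mp E1 with h | h
      exacts [absurd h hd, h]
    have hx5 : x 5 = 0 := by
      rcases mul_eq_zero.mp E3 with h | h
      exacts [absurd h hd, h]
    have hx6 : x 6 = 0 := by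
      have h : α 2 * x 6 = 0 := by linear_combination E2 - x 0 * he
      rcases mul_eq_zero.mp h with h | h
      exacts [absurd h hc, h]
    have hx2 : x 2 = 0 := by
      have h : α 2 * x 2 = 0 := by linear_combination E6 - x 4 * he
      rcases mul_eq_zero.mp h with h | h
      exacts [absurd h hc, h]
    have hx1 : x 1 = 0 := by
      have h : α 3 * x 1 = 0 := by linear_combination E0 + α 0 * hx5 - x 2 * he
      rcases mul_eq_zero.mp h with h | h
      exacts [absurd h hd, h]
    have hx3 : x 3 = 0 := by
      have h : α 3 * x 3 = 0 := by linear_combination E5 - α 0 * hx0 - x 4 * he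
      rcases mul_eq_zero.mp h with h | h
      exacts [absurd h hd, h]
    rw [Submodule.mem_span_singleton]
    refine ⟨x 4, ?_⟩
    funext i
    fin_cases i <;>
      simp [Pi.single_apply, hx0, hx1, hx2, hx3, hx5, hx6, vec7_five, vec7_six, vec7_five', vec7_six']
  · -- kernel is spanned by w
    apply finrank_le_one_of_le_span
      (w := (![0, -(α 4 * α 4), α 3 * α 4, α 2 * α 4, -(α 2 * α 3), 0, 0] : Fin 7 → ℝ))
    intro x hx
    obtain ⟨E0, E1, E2, E3, E4, E5, E6⟩ := key x hx
    have hde : α 3 * α 4 ≠ 0 := mul_ne_zero hd he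
    have hx0 : x 0 = 0 := by
      rcases mul_eq_zero.mp E1 with h | h
      exacts [absurd h hd, h]
    have hx5 : x 5 = 0 := by
      rcases mul_eq_zero.mp E3 with h | h
      exacts [absurd h hd, h]
    have hx6 : x 6 = 0 := by
      have h : α 4 * x 6 = 0 := by linear_combination E4 - α 4 * hx5
      rcases mul_eq_zero.mp h with h | h
      exacts [absurd h he, h]
    have h0' : α 3 * x 1 + α 4 * x 2 = 0 := by linear_combination E0 + α 0 * hx5
    have h5' : α 3 * x 3 + α 4 * x 4 = 0 := by linear_combination E5 - α 0 * hx0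
    rw [Submodule.mem_span_singleton]
    refine ⟨x 2 / (α 3 * α 4), ?_⟩
    funext i
    fin_cases i <;>
      simp [hx0, hx5, hx6, smul_eq_mul, vec7_five, vec7_six, vec7_five', vec7_six']
    · field_simp
      first
        | linear_combination α 4 * h0'
        | linear_combination (-1 : ℝ) * h0'
    · field_simp
    · field_simp
      first
        | linear_combination α 4 * h5' - α 4 * E6
        | linear_combination E6 - h5'
    · field_simp
      first
        | linear_combination α 3 * E6
        | linear_combination (-1 : ℝ) * E6

lemma ker_finrank_two {α : Fin 7 → ℝ} (h : ¬(α 3 ≠ 0 ∧ (α 2 ≠ 0 ∨ α 4 ≠ 0))) :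
    2 ≤ Module.finrank ℝ (LinearMap.ker (gramG2 α).mulVecLin) := by
  by_cases hd : α 3 = 0
  · refine two_le_finrank_of_pair (i := 1) (j := 3) (by decide)
      (single_ker ?_) (single_ker ?_) <;>
      · intro i
        rw [gramG2_eq]
        fin_cases i <;>
          (try simp [hd, Matrix.vecHead, Matrix.vecTail, vec7_five, vec7_six, vec7_five', vec7_six'])
  · have hc : α 2 = 0 := by tauto
    have he : α 4 = 0 := by tauto
    refine two_le_finrank_of_pair (i := 2) (j := 4) (by decide)
      (single_ker ?_) (single_ker ?_) <;>
      · intro i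
        rw [gramG2_eq]
        fin_cases i <;>
          (try simp [hc, he, Matrix.vecHead, Matrix.vecTail, vec7_five, vec7_six, vec7_five', vec7_six'])

lemma rank_add_ker (α : Fin 7 → ℝ) :
    (gramG2 α).rank + Module.finrank ℝ (LinearMap.ker (gramG2 α).mulVecLin) = 7 := by
  have h := LinearMap.finrank_range_add_finrank_ker ((gramG2 α).mulVecLin)
  rw [Matrix.rank]
  simpa using h

/-- For `F ∈ 𝔊₂*` with coordinates `(α₁,…,α₅,α,β)`, the rank of `B_F` is `6`
iff `α₄ ≠ 0` and (`α₃ ≠ 0` or `α₅ ≠ 0`); in particular the maximal rank is `6`. -/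
theorem rank_BF_G2 :
    (∀ α : Fin 7 → ℝ, (gramG2 α).rank ≤ 6) ∧
    (∀ α : Fin 7 → ℝ,
      (gramG2 α).rank = 6 ↔ (α 3 ≠ 0 ∧ (α 2 ≠ 0 ∨ α 4 ≠ 0))) := by
  constructor
  · intro α
    have h1 := rank_add_ker α
    have h2 := one_le_ker α
    omega
  · intro α
    have h1 := rank_add_ker α
    constructor
    · intro h6
      by_contra hcon
      have := ker_finrank_two hcon
      omega
    · rintro ⟨hd, hce⟩
      have := ker_finrank_one hd hce
      omega

end
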